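/- Let n be a positive integer, let H be a finite abelian group of odd order, let G = ℤ/2ⁿℤ × H, and let ι be the inversion automorphism ι(x) = x⁻¹ of G. Then for every subset S ⊆ G such that ι(x⁻¹)·x ∉ S for all x ∈ G and ι(S⁻¹) = S, the generalized Cayley graph GC(G, S, ι) is isomorphic to a Cayley graph on the generalized dihedral group Dih(ℤ/2ⁿ⁻¹ℤ × H); that is, there exists a subset T of Dih(ℤ/2ⁿ⁻¹ℤ × H) with 1 ∉ T and T⁻¹ = T such that GC(G, S, ι) is isomorphic to Cay(Dih(ℤ/2ⁿ⁻¹ℤ × H), T). -/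

import Mathlib

/-- The generalized Cayley graph `GC(G, S, α)`. -/
def GC {G : Type*} [Group G] (α : G ≃* G) (S : Set G)
    (h1 : ∀ x : G, α (α x) = x)
    (h2 : ∀ x : G, α x⁻¹ * x ∉ S)
    (h3 : ⇑α '' S⁻¹ = S) : SimpleGraph G where
  Adj x y := α x⁻¹ * y ∈ S
  symm := ⟨by
    intro x y hxy
    have hmem : (α x⁻¹ * y)⁻¹ ∈ S⁻¹ := by simpa [Set.mem_inv] using hxy
    have himg : α ((α x⁻¹ * y)⁻¹) ∈ ⇑α '' S⁻¹ := Set.mem_image_of_mem _ hmem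
    rw [h3] at himg
    simpa [mul_inv_rev, map_mul, map_inv, h1] using himg⟩
  loopless := ⟨fun x hx => h2 x hx⟩

/-- The Cayley graph `Cay(H, T)`. -/
def Cay {H : Type*} [Group H] (T : Set H) (hT1 : (1 : H) ∉ T) (hT2 : T⁻¹ = T) :
    SimpleGraph H where
  Adj x y := x⁻¹ * y ∈ T
  symm := ⟨by
    intro x y hxy
    have : (x⁻¹ * y)⁻¹ ∈ T⁻¹ := by simpa [Set.mem_inv] using hxy
    rw [hT2] at this
    simpa [mul_inv_rev] using this⟩
  loopless := ⟨fun x hx => hT1 (by simpa using hx)⟩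

/-- The action of `ℤ/2ℤ` on an abelian group `A` in which the nontrivial element acts
by inversion. -/
def dihHom (A : Type*) [CommGroup A] : Multiplicative (ZMod 2) →* MulAut A :=
  MonoidHom.mk'
    (fun i => if Multiplicative.toAdd i = 0 then 1 else MulEquiv.inv A)
    (by
      have hsq : (MulEquiv.inv A) * (MulEquiv.inv A) = 1 := by
        ext a; simp
      have hcases : ∀ x : ZMod 2, x = 0 ∨ x = 1 := by decide
      intro i j
      rcases hcases (Multiplicative.toAdd i) with hi | hi <;>
        rcases hcases (Multiplicative.toAdd j) with hj | hj <;>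
        simp [toAdd_mul, hi, hj, hsq, (by decide : (1 + 1 : ZMod 2) = 0)])

/-- The generalized dihedral group `Dih(A) = A ⋊ ℤ/2ℤ`, the nontrivial element of `ℤ/2ℤ`
acting on the abelian group `A` by inversion. -/
abbrev Dih (A : Type*) [CommGroup A] :=
  SemidirectProduct A (Multiplicative (ZMod 2)) (dihHom A)

namespace Stmt8Aux

/-- cast of `x % n` into `ZMod d` when `d ∣ n`. -/
lemma cast_mod {d n : ℕ} (hd : d ∣ n) (x : ℕ) : ((x % n : ℕ) : ZMod d) = (x : ZMod d) := by
  conv_rhs => rw [← Nat.mod_add_div x n]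
  push_cast
  rw [(ZMod.natCast_eq_zero_iff n d).mpr hd]
  ring

section Dbl

variable {M N : ℕ}

/-- doubling map `ZMod M → ZMod N` where `N = 2M`. -/
def dbl (N : ℕ) (v : ZMod M) : ZMod N := ((2 * v.val : ℕ) : ZMod N)

/-- halving map `ZMod N → ZMod M`. -/
def hlf (M : ℕ) (u : ZMod N) : ZMod M := ((u.val / 2 : ℕ) : ZMod M)

variable [NeZero M] [NeZero N] (hN : N = 2 * M)
include hN

lemma dbl_add (v w : ZMod M) : dbl N (v + w) = dbl N v + dbl N w := by
  unfold dbl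
  rw [ZMod.val_add, ← Nat.mul_mod_mul_left 2, ← hN, cast_mod dvd_rfl]
  push_cast
  ring

lemma dbl_val (v : ZMod M) : (dbl N v).val = 2 * v.val := by
  have h : 2 * v.val < N := by
    rw [hN]
    have := ZMod.val_lt v
    omega
  exact ZMod.val_cast_of_lt h

lemma dbl_inj : Function.Injective (dbl (M := M) N) := by
  intro v w h
  have := congrArg ZMod.val h
  rw [dbl_val hN, dbl_val hN] at this
  have : v.val = w.val := by omega
  exact ZMod.val_injective M this

lemma dbl_even (v : ZMod M) : 2 ∣ (dbl N v).val := by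
  rw [dbl_val hN]; exact Dvd.intro _ rfl

lemma hlf_dbl (v : ZMod M) : hlf M (dbl N v) = v := by
  unfold hlf
  rw [dbl_val hN, Nat.mul_div_cancel_left _ (by norm_num)]
  exact ZMod.natCast_zmod_val v

lemma dbl_hlf (u : ZMod N) (h : 2 ∣ u.val) : dbl N (hlf M u) = u := by
  unfold dbl hlf
  have hlt : u.val / 2 < M := by
    have hv := ZMod.val_lt u
    omega
  rw [ZMod.val_cast_of_lt hlt, Nat.mul_div_cancel' h]
  exact ZMod.natCast_zmod_val u

end Dbl

section Maps

variable {H : Type*} [CommGroup H] {M N : ℕ}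

/-- the embedding `ZMod M × H → ZMod N × H` (multiplicatively written). -/
def theta (N : ℕ) (a : Multiplicative (ZMod M) × H) : Multiplicative (ZMod N) × H :=
  (Multiplicative.ofAdd (dbl N (Multiplicative.toAdd a.1)), a.2)

/-- one-sided inverse of `theta`. -/
def thetaInv (M : ℕ) (x : Multiplicative (ZMod N) × H) : Multiplicative (ZMod M) × H :=
  (Multiplicative.ofAdd (hlf M (Multiplicative.toAdd x.1)), x.2)

/-- parity homomorphism. -/
def par (x : Multiplicative (ZMod N) × H) : Multiplicative (ZMod 2) :=
  Multiplicative.ofAdd (((Multiplicative.toAdd x.1).val : ℕ) : ZMod 2)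

variable [NeZero M] [NeZero N] (hN : N = 2 * M)
include hN

lemma theta_mul (a b : Multiplicative (ZMod M) × H) :
    theta N (a * b) = theta N a * theta N b := by
  unfold theta
  refine Prod.ext ?_ rfl
  show Multiplicative.ofAdd (dbl N (Multiplicative.toAdd a.1 + Multiplicative.toAdd b.1)) = _
  rw [dbl_add hN, ofAdd_add]
  rfl

lemma theta_one : theta N (1 : Multiplicative (ZMod M) × H) = 1 := by
  have := theta_mul (H := H) hN 1 1
  rw [mul_one] at this
  exact (mul_eq_left.mp this.symm)

lemma theta_inv (a : Multiplicative (ZMod M) × H) : theta N a⁻¹ = (theta N a)⁻¹ := by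
  have h : theta N a⁻¹ * theta N a = 1 := by
    rw [← theta_mul hN, inv_mul_cancel, theta_one hN]
  exact eq_inv_of_mul_eq_one_left h

lemma theta_inj : Function.Injective (theta (H := H) (M := M) N) := by
  intro a b h
  have h1 := congrArg Prod.fst h
  have h2 := congrArg Prod.snd h
  have h1' : dbl N (Multiplicative.toAdd a.1) = dbl N (Multiplicative.toAdd b.1) :=
    congrArg Multiplicative.toAdd h1
  have := dbl_inj hN h1'
  refine Prod.ext ?_ h2
  exact Multiplicative.toAdd.injective this

lemma thetaInv_theta (a : Multiplicative (ZMod M) × H) : thetaInv M (theta N a) = a := by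
  unfold thetaInv theta
  refine Prod.ext ?_ rfl
  show Multiplicative.ofAdd (hlf M (dbl N (Multiplicative.toAdd a.1))) = _
  rw [hlf_dbl hN]
  rfl

lemma theta_thetaInv (x : Multiplicative (ZMod N) × H)
    (h : 2 ∣ (Multiplicative.toAdd x.1).val) : theta N (thetaInv M x) = x := by
  unfold thetaInv theta
  refine Prod.ext ?_ rfl
  show Multiplicative.ofAdd (dbl N (hlf M (Multiplicative.toAdd x.1))) = _
  rw [dbl_hlf hN _ h]
  rfl

omit hN

lemma par_mul (h2 : (2 : ℕ) ∣ N) (x y : Multiplicative (ZMod N) × H) :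
    par (x * y) = par x * par y := by
  unfold par
  show Multiplicative.ofAdd
      (((Multiplicative.toAdd x.1 + Multiplicative.toAdd y.1).val : ℕ) : ZMod 2) = _
  rw [ZMod.val_add, cast_mod h2, Nat.cast_add, ofAdd_add]

lemma par_one : par (1 : Multiplicative (ZMod N) × H) = 1 := by
  unfold par
  show Multiplicative.ofAdd (((0 : ZMod N).val : ℕ) : ZMod 2) = 1
  rw [ZMod.val_zero]
  rfl

lemma par_inv (h2 : (2 : ℕ) ∣ N) (x : Multiplicative (ZMod N) × H) :
    par x⁻¹ = (par x)⁻¹ := by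
  have h : par x⁻¹ * par x = 1 := by
    rw [← par_mul h2, inv_mul_cancel, par_one]
  exact eq_inv_of_mul_eq_one_left h

lemma par_eq_one_iff (x : Multiplicative (ZMod N) × H) :
    par x = 1 ↔ 2 ∣ (Multiplicative.toAdd x.1).val := by
  unfold par
  rw [← ZMod.natCast_eq_zero_iff]
  constructor
  · intro h
    exact congrArg Multiplicative.toAdd h
  · intro h
    exact congrArg Multiplicative.ofAdd h

include hN in
lemma par_theta (a : Multiplicative (ZMod M) × H) : par (theta N a) = 1 := by
  rw [par_eq_one_iff]
  exact dbl_even hN _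

end Maps

end Stmt8Aux

lemma dihHom_one_apply {A : Type*} [CommGroup A] (a : A) : dihHom A 1 a = a := by
  show (if Multiplicative.toAdd (1 : Multiplicative (ZMod 2)) = 0 then (1 : MulAut A)
    else MulEquiv.inv A) a = a
  rw [if_pos (by rfl)]
  rfl

lemma dihHom_r_apply {A : Type*} [CommGroup A] (a : A) :
    dihHom A (Multiplicative.ofAdd 1) a = a⁻¹ := by
  show (if Multiplicative.toAdd (Multiplicative.ofAdd (1 : ZMod 2)) = 0 then (1 : MulAut A)
    else MulEquiv.inv A) a = a⁻¹
  rw [if_neg (by decide)]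
  rfl



namespace Stmt8Main

open Stmt8Aux

section Main

variable {H : Type*} [CommGroup H] {M N : ℕ}

/-- the distinguished odd element. -/
def cc (N : ℕ) : Multiplicative (ZMod N) × H := (Multiplicative.ofAdd 1, 1)

/-- the reflection. -/
def rr : Multiplicative (ZMod 2) := Multiplicative.ofAdd 1

/-- the map sending `s ∈ S` to the connection-set element. -/
def FF (M : ℕ) (s : Multiplicative (ZMod N) × H) :
    Dih (Multiplicative (ZMod M) × H) :=
  ⟨thetaInv M (cc N * s⁻¹), rr⟩

open Classical in
/-- the vertex bijection. -/
noncomputable def ff (M : ℕ) (x : Multiplicative (ZMod N) × H) :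
    Dih (Multiplicative (ZMod M) × H) :=
  if par x = 1 then ⟨thetaInv M x, 1⟩ else FF M x

open Classical in
/-- inverse of the vertex bijection. -/
noncomputable def gg (N : ℕ) (d : Dih (Multiplicative (ZMod M) × H)) :
    Multiplicative (ZMod N) × H :=
  if d.right = 1 then theta N d.left else cc N * (theta N d.left)⁻¹

lemma dich (ε : Multiplicative (ZMod 2)) : ε = 1 ∨ ε = rr := by
  have h : ∀ δ : Multiplicative (ZMod 2), δ = 1 ∨ δ = rr := by decide
  exact h ε

lemma rr_ne_one : (rr : Multiplicative (ZMod 2)) ≠ 1 := by decide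

lemma rr_inv : (rr : Multiplicative (ZMod 2))⁻¹ = rr := by decide

lemma rr_mul_rr : (rr : Multiplicative (ZMod 2)) * rr = 1 := by decide

lemma FF_right (s : Multiplicative (ZMod N) × H) :
    (FF (N := N) (H := H) M s).right = rr := rfl

/-- multiplying an "even" inverse with any element of `Dih`. -/
lemma inv_mul_even {A : Type*} [CommGroup A] (a b : A) (ε : Multiplicative (ZMod 2)) :
    (⟨a, 1⟩ : Dih A)⁻¹ * ⟨b, ε⟩ = ⟨a⁻¹ * b, ε⟩ := by
  refine SemidirectProduct.ext ?_ ?_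
  · simp only [SemidirectProduct.mul_left, SemidirectProduct.inv_left,
      SemidirectProduct.inv_right, inv_one, dihHom_one_apply]
  · simp only [SemidirectProduct.mul_right, SemidirectProduct.inv_right, inv_one, one_mul]

/-- multiplying an "odd" inverse with an element of `Dih`. -/
lemma inv_mul_odd {A : Type*} [CommGroup A] (a b : A) (ε : Multiplicative (ZMod 2)) :
    (⟨a, rr⟩ : Dih A)⁻¹ * ⟨b, ε⟩ = ⟨a * b⁻¹, rr * ε⟩ := by
  unfold rr
  have hinv : (Multiplicative.ofAdd (1 : ZMod 2))⁻¹ = Multiplicative.ofAdd 1 := by decide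
  refine SemidirectProduct.ext ?_ ?_
  · simp only [SemidirectProduct.mul_left, SemidirectProduct.inv_left,
      SemidirectProduct.inv_right, hinv, dihHom_r_apply, inv_inv]
  · simp only [SemidirectProduct.mul_right, SemidirectProduct.inv_right, hinv]

variable [NeZero M] [NeZero N] (hN : N = 2 * M) [Fact (1 < N)]

lemma two_dvd_N (hN : N = 2 * M) : (2 : ℕ) ∣ N := ⟨M, hN⟩

lemma par_cc : par (cc N : Multiplicative (ZMod N) × H) = rr := by
  unfold par cc rr
  show Multiplicative.ofAdd (((1 : ZMod N).val : ℕ) : ZMod 2) = _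
  rw [ZMod.val_one]
  norm_num

include hN

lemma par_cc_mul_inv (x : Multiplicative (ZMod N) × H) (hx : par x = rr) :
    par (cc N * x⁻¹) = 1 := by
  rw [par_mul (two_dvd_N hN), par_inv (two_dvd_N hN), hx, par_cc, rr_inv, rr_mul_rr]

lemma gg_ff (x : Multiplicative (ZMod N) × H) : gg N (ff M x) = x := by
  by_cases h : par x = 1
  · unfold ff
    rw [if_pos h]
    unfold gg
    rw [if_pos rfl]
    exact theta_thetaInv hN x ((par_eq_one_iff x).mp h)
  · have hx : par x = rr := (dich (par x)).resolve_left h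
    unfold ff
    rw [if_neg h]
    unfold FF gg
    rw [if_neg rr_ne_one]
    show cc N * (theta N (thetaInv M (cc N * x⁻¹)))⁻¹ = x
    rw [theta_thetaInv hN _ ((par_eq_one_iff _).mp (par_cc_mul_inv hN x hx))]
    simp [mul_inv_rev, mul_comm, mul_left_comm, mul_assoc]

lemma ff_gg (d : Dih (Multiplicative (ZMod M) × H)) : ff M (gg N d) = d := by
  rcases dich d.right with h | h
  · unfold gg
    rw [if_pos h]
    unfold ff
    rw [if_pos (par_theta hN d.left)]
    exact SemidirectProduct.ext (by rw [thetaInv_theta hN]) h.symm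
  · unfold gg
    rw [if_neg (by rw [h]; exact rr_ne_one)]
    have hpar : par (cc N * (theta N d.left)⁻¹) = rr := by
      rw [par_mul (two_dvd_N hN), par_inv (two_dvd_N hN), par_theta hN, par_cc, inv_one,
        mul_one]
    unfold ff
    rw [if_neg (by rw [hpar]; exact rr_ne_one)]
    unfold FF
    refine SemidirectProduct.ext ?_ h.symm
    show thetaInv M (cc N * (cc N * (theta N d.left)⁻¹)⁻¹) = d.left
    have hsimp : cc N * (cc N * (theta N d.left)⁻¹)⁻¹ = theta N d.left := by
      simp [mul_inv_rev, mul_comm, mul_left_comm, mul_assoc]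
    rw [hsimp, thetaInv_theta hN]

lemma FF_inj_on_odd (z s : Multiplicative (ZMod N) × H) (hz : par z = rr)
    (hs : par s = rr) (h : FF (N := N) (H := H) M s = FF M z) : s = z := by
  have hl : thetaInv M (cc N * s⁻¹) = thetaInv M (cc N * z⁻¹) :=
    congrArg SemidirectProduct.left h
  have heq := congrArg (theta (H := H) N) hl
  rw [theta_thetaInv hN _ ((par_eq_one_iff _).mp (par_cc_mul_inv hN s hs)),
    theta_thetaInv hN _ ((par_eq_one_iff _).mp (par_cc_mul_inv hN z hz))] at heq
  exact inv_injective (mul_left_cancel heq)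

lemma ff_right_even (x : Multiplicative (ZMod N) × H) (hx : par x = 1) :
    (ff (N := N) (H := H) M x).right = 1 := by
  unfold ff
  rw [if_pos hx]

lemma ff_right_odd (x : Multiplicative (ZMod N) × H) (hx : ¬ par x = 1) :
    (ff (N := N) (H := H) M x).right = rr := by
  unfold ff
  rw [if_neg hx]
  rfl

omit hN in
lemma memT_right (S : Set (Multiplicative (ZMod N) × H)) :
    ∀ d ∈ FF (N := N) (H := H) M '' S, d.right = rr := by
  rintro d ⟨s, _, rfl⟩
  rfl

lemma adj_iff (S : Set (Multiplicative (ZMod N) × H))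
    (hS : ∀ s ∈ S, par s = rr) (x y : Multiplicative (ZMod N) × H) :
    x * y ∈ S ↔ (ff M x)⁻¹ * ff M y ∈ FF M '' S := by
  have memT_iff : ∀ z : Multiplicative (ZMod N) × H, par z = rr →
      (FF M z ∈ FF M '' S ↔ z ∈ S) := by
    intro z hz
    constructor
    · rintro ⟨s, hs, heq⟩
      rwa [← FF_inj_on_odd hN z s hz (hS s hs) heq]
    · exact fun h => Set.mem_image_of_mem _ h
  by_cases hx : par x = 1 <;> by_cases hy : par y = 1
  · -- both even: both sides false
    constructor
    · intro h
      have hc := hS _ h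
      rw [par_mul (two_dvd_N hN), hx, hy, one_mul] at hc
      exact absurd hc.symm rr_ne_one
    · intro h
      have h1 := memT_right S _ h
      rw [SemidirectProduct.mul_right, SemidirectProduct.inv_right,
        ff_right_even hN x hx, ff_right_even hN y hy, inv_one, one_mul] at h1
      exact absurd h1.symm rr_ne_one
  · -- x even, y odd
    have hy' : par y = rr := (dich (par y)).resolve_left hy
    have hxy : par (x * y) = rr := by
      rw [par_mul (two_dvd_N hN), hx, hy', one_mul]
    have heq : (ff M x)⁻¹ * ff M y = FF M (x * y) := by
      unfold ff
      rw [if_pos hx, if_neg hy]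
      unfold FF
      rw [inv_mul_even]
      refine SemidirectProduct.ext ?_ rfl
      show (thetaInv M x)⁻¹ * thetaInv M (cc N * y⁻¹) = thetaInv M (cc N * (x * y)⁻¹)
      apply theta_inj hN
      rw [theta_mul hN, theta_inv hN,
        theta_thetaInv hN _ ((par_eq_one_iff _).mp hx),
        theta_thetaInv hN _ ((par_eq_one_iff _).mp (par_cc_mul_inv hN y hy')),
        theta_thetaInv hN _ ((par_eq_one_iff _).mp (par_cc_mul_inv hN _ hxy))]
      simp [mul_inv_rev, mul_comm, mul_left_comm, mul_assoc]
    rw [heq]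
    exact (memT_iff _ hxy).symm
  · -- x odd, y even
    have hx' : par x = rr := (dich (par x)).resolve_left hx
    have hxy : par (x * y) = rr := by
      rw [par_mul (two_dvd_N hN), hx', hy, mul_one]
    have heq : (ff M x)⁻¹ * ff M y = FF M (x * y) := by
      unfold ff
      rw [if_neg hx, if_pos hy]
      unfold FF
      rw [inv_mul_odd]
      refine SemidirectProduct.ext ?_ (by rw [mul_one])
      show thetaInv M (cc N * x⁻¹) * (thetaInv M y)⁻¹ = thetaInv M (cc N * (x * y)⁻¹)
      apply theta_inj hN
      rw [theta_mul hN, theta_inv hN,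
        theta_thetaInv hN _ ((par_eq_one_iff _).mp (par_cc_mul_inv hN x hx')),
        theta_thetaInv hN _ ((par_eq_one_iff _).mp hy),
        theta_thetaInv hN _ ((par_eq_one_iff _).mp (par_cc_mul_inv hN _ hxy))]
      simp [mul_inv_rev, mul_comm, mul_left_comm, mul_assoc]
    rw [heq]
    exact (memT_iff _ hxy).symm
  · -- both odd: both sides false
    have hx' : par x = rr := (dich (par x)).resolve_left hx
    have hy' : par y = rr := (dich (par y)).resolve_left hy
    constructor
    · intro h
      have hc := hS _ h
      rw [par_mul (two_dvd_N hN), hx', hy', rr_mul_rr] at hc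
      exact absurd hc.symm rr_ne_one
    · intro h
      have h1 := memT_right S _ h
      rw [SemidirectProduct.mul_right, SemidirectProduct.inv_right,
        ff_right_odd hN x hx, ff_right_odd hN y hy, rr_inv, rr_mul_rr] at h1
      exact absurd h1.symm rr_ne_one

omit hN in
lemma FF_involution (s : Multiplicative (ZMod N) × H) :
    (FF (N := N) (H := H) M s)⁻¹ = FF M s := by
  unfold FF rr
  have hinv : (Multiplicative.ofAdd (1 : ZMod 2))⁻¹ = Multiplicative.ofAdd 1 := by decide
  refine SemidirectProduct.ext ?_ ?_
  · simp only [SemidirectProduct.inv_left, SemidirectProduct.inv_right, hinv,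
      dihHom_r_apply, inv_inv]
  · simp only [SemidirectProduct.inv_right, hinv]

end Main

end Stmt8Main

/-- For `n ≥ 1`, `H` a finite abelian group of odd order,
`G = ℤ/2ⁿℤ × H` and `ι` the inversion automorphism of `G`, every generalized Cayley graph
`GC(G, S, ι)` is isomorphic to a Cayley graph on `Dih(ℤ/2ⁿ⁻¹ℤ × H)`. -/
theorem stmt_8 (n : ℕ) (hn : 0 < n) (H : Type*) [CommGroup H] [Fintype H]
    (hodd : Odd (Fintype.card H))
    (S : Set (Multiplicative (ZMod (2 ^ n)) × H))
    (h1 : ∀ x : Multiplicative (ZMod (2 ^ n)) × H,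
      (MulEquiv.inv _) ((MulEquiv.inv _) x) = x)
    (h2 : ∀ x : Multiplicative (ZMod (2 ^ n)) × H, (MulEquiv.inv _) x⁻¹ * x ∉ S)
    (h3 : ⇑(MulEquiv.inv (Multiplicative (ZMod (2 ^ n)) × H)) '' S⁻¹ = S) :
    ∃ (T : Set (Dih (Multiplicative (ZMod (2 ^ (n - 1))) × H)))
      (hT1 : (1 : Dih (Multiplicative (ZMod (2 ^ (n - 1))) × H)) ∉ T)
      (hT2 : T⁻¹ = T),
      Nonempty (GC (MulEquiv.inv (Multiplicative (ZMod (2 ^ n)) × H)) S h1 h2 h3 ≃g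
        Cay T hT1 hT2)  := by
  classical
  haveI : NeZero (2 ^ (n - 1)) := ⟨(pow_pos (by norm_num : (0:ℕ) < 2) _).ne'⟩
  haveI : NeZero (2 ^ n) := ⟨(pow_pos (by norm_num : (0:ℕ) < 2) _).ne'⟩
  have hN : 2 ^ n = 2 * 2 ^ (n - 1) := by
    have hsucc : n - 1 + 1 = n := Nat.succ_pred_eq_of_pos hn
    calc 2 ^ n = 2 ^ (n - 1 + 1) := by rw [hsucc]
    _ = 2 * 2 ^ (n - 1) := by rw [pow_succ]; ring
  haveI : Fact (1 < 2 ^ n) := ⟨by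
    calc 1 < 2 := by norm_num
    _ = 2 ^ 1 := (pow_one 2).symm
    _ ≤ 2 ^ n := Nat.pow_le_pow_right (by norm_num) hn⟩
  have hS : ∀ s ∈ S, Stmt8Aux.par s = Stmt8Main.rr := by
    intro s hs
    rcases Stmt8Main.dich (Stmt8Aux.par s) with h | h
    · exfalso
      have hdvd : 2 ∣ (Multiplicative.toAdd s.1).val := (Stmt8Aux.par_eq_one_iff s).mp h
      obtain ⟨m, hm⟩ := hodd
      set e := m + 1 with he
      set k := s.2 ^ e with hk
      set w : ZMod (2 ^ n) := (((Multiplicative.toAdd s.1).val / 2 : ℕ) : ZMod (2 ^ n))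
        with hw
      have hms : ((Multiplicative.ofAdd w, k) : Multiplicative (ZMod (2 ^ n)) × H) *
          (Multiplicative.ofAdd w, k) = s := by
        refine Prod.ext ?_ ?_
        · show Multiplicative.ofAdd w * Multiplicative.ofAdd w = s.1
          rw [← ofAdd_add]
          have hww : w + w = Multiplicative.toAdd s.1 := by
            rw [hw, ← Nat.cast_add]
            have h2' : (Multiplicative.toAdd s.1).val / 2 + (Multiplicative.toAdd s.1).val / 2
                = (Multiplicative.toAdd s.1).val := by omega
            rw [h2', ZMod.natCast_zmod_val]
          rw [hww]
          rfl
        · show k * k = s.2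
          rw [hk, ← pow_add]
          have hee : e + e = Fintype.card H + 1 := by omega
          rw [hee, pow_succ, pow_card_eq_one, one_mul]
      have hnot := h2 ((Multiplicative.ofAdd w, k))
      rw [MulEquiv.inv_apply, inv_inv] at hnot
      exact hnot (by rw [hms]; exact hs)
    · exact h
  refine ⟨Stmt8Main.FF (2 ^ (n - 1)) '' S, ?_, ?_, ?_⟩
  · intro hmem
    have h1' := Stmt8Main.memT_right S _ hmem
    rw [SemidirectProduct.one_right] at h1'
    exact Stmt8Main.rr_ne_one h1'.symm
  · ext d
    rw [Set.mem_inv]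
    constructor
    · rintro ⟨s, hs, heq⟩
      have hd : d = Stmt8Main.FF (2 ^ (n - 1)) s := by
        rw [← inv_inv d, ← heq, Stmt8Main.FF_involution]
      rw [hd]
      exact Set.mem_image_of_mem _ hs
    · rintro ⟨s, hs, heq⟩
      exact ⟨s, hs, by rw [← heq, Stmt8Main.FF_involution]⟩
  · refine ⟨⟨Equiv.mk (Stmt8Main.ff (2 ^ (n - 1))) (Stmt8Main.gg (2 ^ n))
      (fun x => Stmt8Main.gg_ff hN x) (fun d => Stmt8Main.ff_gg hN d), ?_⟩⟩
    intro x y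
    show (Stmt8Main.ff (2 ^ (n - 1)) x)⁻¹ * Stmt8Main.ff (2 ^ (n - 1)) y ∈
      Stmt8Main.FF (2 ^ (n - 1)) '' S ↔
      (MulEquiv.inv (Multiplicative (ZMod (2 ^ n)) × H)) x⁻¹ * y ∈ S
    rw [MulEquiv.inv_apply, inv_inv]
    exact (Stmt8Main.adj_iff hN S hS x y).symm
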